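/- If f' : [0,1] → ℝ is absolutely continuous, f'' ∈ L¹(0,1), and γ₂ ≤ f''(t) ≤ Γ₂ on [0,1], then |Q(f) - P(f)| ≤ ((Γ₂ - γ₂)/2)((5/96)√6 - (29/432)√3), where Q(f) = ∫₀¹ f - (√2/8)f(0) - (1-√2/4)f(1/2) - (√2/8)f(1) and P(f) = ((4 - 3√2)/96)(f'(1) - f'(0)). -/

import Mathlib

open MeasureTheory Real Set

lemma fubini_tri (g φ : ℝ → ℝ) (b : ℝ) (hb : 0 ≤ b)
    (hg : IntervalIntegrable g volume 0 b) (hφ : Continuous φ) :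
    ∫ t in (0:ℝ)..b, φ t * ∫ s in (0:ℝ)..t, g s
      = ∫ s in (0:ℝ)..b, (∫ t in s..b, φ t) * g s := by
  have hgI : IntegrableOn g (Ioc 0 b) := hg.1
  set μ := volume.restrict (Ioc (0:ℝ) b) with hμ
  haveI : IsFiniteMeasure μ := by
    constructor
    rw [hμ, Measure.restrict_apply_univ, Real.volume_Ioc]
    exact ENNReal.ofReal_lt_top
  obtain ⟨C, hC⟩ := (isCompact_Icc (a := (0:ℝ)) (b := b)).exists_bound_of_continuousOn
    hφ.continuousOn
  set F : ℝ × ℝ → ℝ := fun p => if p.2 ≤ p.1 then φ p.1 * g p.2 else 0 with hF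
  have hmeas : AEStronglyMeasurable F (μ.prod μ) := by
    have h1 : AEStronglyMeasurable (fun p : ℝ × ℝ => φ p.1 * g p.2) (μ.prod μ) :=
      ((hφ.comp continuous_fst).aestronglyMeasurable).mul hgI.aestronglyMeasurable.comp_snd
    have h2 : F = Set.indicator {p : ℝ × ℝ | p.2 ≤ p.1} (fun p => φ p.1 * g p.2) := by
      ext p; by_cases h : p.2 ≤ p.1 <;> simp [hF, h]
    rw [h2]
    exact h1.indicator (measurableSet_le measurable_snd measurable_fst)
  have hprodres : μ.prod μ = (volume.prod volume).restrict (Ioc (0:ℝ) b ×ˢ Ioc (0:ℝ) b) := by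
    rw [hμ, Measure.prod_restrict]
  have hint : Integrable F (μ.prod μ) := by
    have hbound : Integrable (fun p : ℝ × ℝ => |C| * |g p.2|) (μ.prod μ) :=
      (integrable_const (|C|)).mul_prod hgI.abs
    refine hbound.mono' hmeas ?_
    have hae : ∀ᵐ p : ℝ × ℝ ∂(μ.prod μ), p ∈ Ioc (0:ℝ) b ×ˢ Ioc (0:ℝ) b := by
      rw [hprodres]
      exact ae_restrict_mem (measurableSet_Ioc.prod measurableSet_Ioc)
    filter_upwards [hae] with p hp
    rcases hp with ⟨hp1, _⟩
    by_cases h : p.2 ≤ p.1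
    · simp only [hF, h, if_true, Real.norm_eq_abs, abs_mul]
      have hφb : |φ p.1| ≤ |C| := (hC p.1 ⟨hp1.1.le, hp1.2⟩).trans (le_abs_self C)
      exact mul_le_mul_of_nonneg_right hφb (abs_nonneg _)
    · simp only [hF, h, if_false, norm_zero]
      positivity
  have swap := MeasureTheory.integral_integral_swap (f := fun t s => F (t, s)) hint
  have hLHS : (∫ t, (∫ s, F (t, s) ∂μ) ∂μ)
      = ∫ t in (0:ℝ)..b, φ t * ∫ s in (0:ℝ)..t, g s := by
    rw [intervalIntegral.integral_of_le hb, hμ]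
    refine setIntegral_congr_fun measurableSet_Ioc (fun t ht => ?_)
    have h1 : (fun s => F (t, s)) = Set.indicator (Iic t) (fun s => φ t * g s) := by
      ext s; by_cases h : s ≤ t <;> simp [hF, h]
    rw [h1, integral_indicator measurableSet_Iic, Measure.restrict_restrict measurableSet_Iic]
    have h2 : Iic t ∩ Ioc 0 b = Ioc 0 t := by
      ext x; simp only [mem_inter_iff, mem_Iic, mem_Ioc]
      exact ⟨fun ⟨h1', h2', h3'⟩ => ⟨h2', h1'⟩, fun ⟨h1', h2'⟩ => ⟨h2', h1', h2'.trans ht.2⟩⟩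
    rw [h2, MeasureTheory.integral_const_mul, intervalIntegral.integral_of_le ht.1.le]
  have hRHS : (∫ s, (∫ t, F (t, s) ∂μ) ∂μ)
      = ∫ s in (0:ℝ)..b, (∫ t in s..b, φ t) * g s := by
    rw [intervalIntegral.integral_of_le hb, hμ]
    refine setIntegral_congr_fun measurableSet_Ioc (fun s hs => ?_)
    have h1 : (fun t => F (t, s)) = Set.indicator (Ici s) (fun t => φ t * g s) := by
      ext t; by_cases h : s ≤ t <;> simp [hF, h]
    rw [h1, integral_indicator measurableSet_Ici, Measure.restrict_restrict measurableSet_Ici]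
    have h2 : Ici s ∩ Ioc 0 b = Icc s b := by
      ext x; simp only [mem_inter_iff, mem_Ici, mem_Ioc, mem_Icc]
      exact ⟨fun ⟨h1', _, h3'⟩ => ⟨h1', h3'⟩, fun ⟨h1', h2'⟩ => ⟨h1', hs.1.trans_le h1', h2'⟩⟩
    rw [h2, MeasureTheory.integral_mul_const, MeasureTheory.integral_Icc_eq_integral_Ioc,
      ← intervalIntegral.integral_of_le hs.2]
  rw [← hLHS, ← hRHS]
  exact swap

lemma poly_int (u v w a b : ℝ) :
    ∫ s in a..b, (u * s ^ 2 + v * s + w) = u * (b ^ 3 - a ^ 3) / 3 + v * (b ^ 2 - a ^ 2) / 2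
      + w * (b - a) := by
  have h1 : IntervalIntegrable (fun s : ℝ => u * s ^ 2) volume a b :=
    (continuous_const.mul (continuous_pow 2)).intervalIntegrable _ _
  have h2 : IntervalIntegrable (fun s : ℝ => v * s) volume a b :=
    (continuous_const.mul continuous_id').intervalIntegrable _ _
  have h3 : IntervalIntegrable (fun s : ℝ => w) volume a b := intervalIntegrable_const
  rw [intervalIntegral.integral_add (h1.add h2) h3, intervalIntegral.integral_add h1 h2,
    intervalIntegral.integral_const_mul, intervalIntegral.integral_const_mul,
    integral_pow, integral_id,
    intervalIntegral.integral_const, smul_eq_mul]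
  ring

set_option maxHeartbeats 2000000 in
theorem stmt_14 (f f' f'' : ℝ → ℝ) (γ₂ Γ₂ : ℝ)
    (hf : ∀ t ∈ Icc (0:ℝ) 1, f t = f 0 + ∫ s in (0:ℝ)..t, f' s)
    (hac : ∀ t ∈ Icc (0:ℝ) 1, f' t = f' 0 + ∫ s in (0:ℝ)..t, f'' s)
    (hint : IntervalIntegrable f'' volume 0 1)
    (hbd : ∀ t ∈ Icc (0:ℝ) 1, γ₂ ≤ f'' t ∧ f'' t ≤ Γ₂) :
    |((∫ t in (0:ℝ)..1, f t) - Real.sqrt 2 / 8 * f 0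
        - (1 - Real.sqrt 2 / 4) * f (1/2) - Real.sqrt 2 / 8 * f 1)
      - (4 - 3 * Real.sqrt 2) / 96 * (f' 1 - f' 0)|
      ≤ (Γ₂ - γ₂) / 2 * (5/96 * Real.sqrt 6 - 29/432 * Real.sqrt 3) := by
  set s2 := Real.sqrt 2 with hs2
  set s3 := Real.sqrt 3 with hs3
  set s6 := Real.sqrt 6 with hs6
  have h2 : s2 ^ 2 = 2 := Real.sq_sqrt (by norm_num)
  have h3 : s3 ^ 2 = 3 := Real.sq_sqrt (by norm_num)
  have h6sq : s6 ^ 2 = 6 := Real.sq_sqrt (by norm_num)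
  have h6 : s6 = s2 * s3 := by
    rw [hs2, hs3, hs6, show (6:ℝ) = 2 * 3 by norm_num]
    exact Real.sqrt_mul (by norm_num) 3
  have hs2nn : 0 ≤ s2 := Real.sqrt_nonneg 2
  have hs3nn : 0 ≤ s3 := Real.sqrt_nonneg 3
  have hs6nn : 0 ≤ s6 := Real.sqrt_nonneg 6
  have hs2lt : s2 < 1.5 := by nlinarith only [h2, hs2nn]
  have hs3gt : 1.7 < s3 := by nlinarith only [h3, hs3nn]
  have hs3lt : s3 < 1.8 := by nlinarith only [h3, hs3nn]
  have hs6gt : 2.4 < s6 := by nlinarith only [h6sq, hs6nn]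
  have hs6lt : s6 < 2.5 := by nlinarith only [h6sq, hs6nn]
  have hmix1 : s3 * s6 = 3 * s2 := by rw [h6]; linear_combination s2 * h3
  have hmix2 : s2 * s6 = 2 * s3 := by rw [h6]; linear_combination s3 * h2
  set r₁ := (3*s2 - 3*s6 + 2*s3)/24 with hr1
  set r₂ := (3*s2 + 3*s6 - 2*s3)/24 with hr2
  have hp : r₁ + r₂ = s2/4 := by rw [hr1, hr2]; ring
  have hq : r₁ * r₂ = (3*s2 - 4)/48 := by
    rw [hr1, hr2]
    linear_combination (9/576) * h2 - (9/576) * h6sq - (4/576) * h3 + (12/576) * hmix1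
  have hd : r₂ - r₁ = (3*s6 - 2*s3)/12 := by rw [hr1, hr2]; ring
  have hr10 : 0 ≤ r₁ := by
    have habs : (3*s2 + 2*s3)^2 - (3*s6)^2 = 12*s6 - 24 := by
      linear_combination 9 * h2 + 4 * h3 - 9 * h6sq - 12 * h6
    rw [hr1]
    nlinarith only [habs, hs6gt, hs2nn, hs3nn, hs6nn]
  have hr12 : r₁ ≤ r₂ := by rw [hr1, hr2]; linarith only [hs6gt, hs3lt]
  have hr2h : r₂ ≤ 1/2 := by rw [hr2]; linarith only [hs2lt, hs6lt, hs3gt]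
  clear_value s2 s3 s6 r₁ r₂
  -- chunk 2
  have h0m : (0:ℝ) ∈ Icc (0:ℝ) 1 := by norm_num
  have h1m : (1:ℝ) ∈ Icc (0:ℝ) 1 := by norm_num
  have hhm : (1/2:ℝ) ∈ Icc (0:ℝ) 1 := by norm_num
  have hsub : ∀ a b : ℝ, a ∈ Icc (0:ℝ) 1 → b ∈ Icc (0:ℝ) 1 → uIcc a b ⊆ Icc 0 1 := by
    intro a b ha hb
    rw [← uIcc_of_le (zero_le_one (α := ℝ))]
    exact uIcc_subset_uIcc (by rwa [uIcc_of_le zero_le_one]) (by rwa [uIcc_of_le zero_le_one])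
  have hf''sub : ∀ a b : ℝ, a ∈ Icc (0:ℝ) 1 → b ∈ Icc (0:ℝ) 1 →
      IntervalIntegrable f'' volume a b := by
    intro a b ha hb
    apply hint.mono_set
    rw [uIcc_of_le (zero_le_one (α := ℝ))]
    exact hsub a b ha hb
  have hMI : ∀ (p : ℝ → ℝ), Continuous p → ∀ a b : ℝ, a ∈ Icc (0:ℝ) 1 → b ∈ Icc (0:ℝ) 1 →
      IntervalIntegrable (fun s => p s * f'' s) volume a b :=
    fun p hp a b ha hb => (hf''sub a b ha hb).continuousOn_mul hp.continuousOn
  set A : ℝ → ℝ := fun t => ∫ s in (0:ℝ)..t, f'' s with hA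
  have hAcont : ContinuousOn A (Icc 0 1) := by
    have := intervalIntegral.continuousOn_primitive_interval' hint
      (by rw [uIcc_of_le (zero_le_one (α := ℝ))]; exact h0m)
    rwa [uIcc_of_le (zero_le_one (α := ℝ))] at this
  have hAsub : ∀ a b : ℝ, a ∈ Icc (0:ℝ) 1 → b ∈ Icc (0:ℝ) 1 →
      IntervalIntegrable A volume a b := by
    intro a b ha hb
    exact (hAcont.mono (hsub a b ha hb)).intervalIntegrable
  have hrep : ∀ t, t ∈ Icc (0:ℝ) 1 → f t = f 0 + f' 0 * t + ∫ s in (0:ℝ)..t, A s := by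
    intro t ht
    rw [hf t ht]
    have h1 : ∫ s in (0:ℝ)..t, f' s = ∫ s in (0:ℝ)..t, (f' 0 + A s) := by
      apply intervalIntegral.integral_congr
      intro s hs
      have := hac s (hsub 0 t h0m ht hs)
      simp only [hA]
      exact this
    rw [h1, intervalIntegral.integral_add intervalIntegrable_const (hAsub 0 t h0m ht),
      intervalIntegral.integral_const, smul_eq_mul]
    ring
  have hBfull : ∀ b : ℝ, b ∈ Icc (0:ℝ) 1 → ∫ t in (0:ℝ)..b, A t
      = ∫ s in (0:ℝ)..b, (b - s) * f'' s := by
    intro b hb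
    have H := fubini_tri f'' (fun _ => 1) b hb.1 (hf''sub 0 b h0m hb) continuous_const
    have e1 : ∫ t in (0:ℝ)..b, A t = ∫ t in (0:ℝ)..b, 1 * ∫ s in (0:ℝ)..t, f'' s := by
      apply intervalIntegral.integral_congr; intro t _; simp [hA]
    rw [e1, H]
    apply intervalIntegral.integral_congr; intro s _
    simp only [integral_one]
  have hB1 : f 1 = f 0 + f' 0 + ∫ s in (0:ℝ)..1, (1 - s) * f'' s := by
    rw [hrep 1 h1m, hBfull 1 h1m]; ring
  have hBh : f (1/2) = f 0 + f' 0 / 2 + ∫ s in (0:ℝ)..(1/2), (1/2 - s) * f'' s := by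
    rw [hrep (1/2) hhm, hBfull (1/2) hhm]; ring
  have hA1 : f' 1 - f' 0 = ∫ s in (0:ℝ)..1, f'' s := by
    rw [hac 1 h1m]; ring
  have hIf : ∫ t in (0:ℝ)..1, f t
      = f 0 + f' 0 / 2 + ∫ s in (0:ℝ)..1, ((1-s)^2/2) * f'' s := by
    have hBint : IntervalIntegrable (fun t => ∫ s in (0:ℝ)..t, A s) volume 0 1 := by
      apply ContinuousOn.intervalIntegrable
      rw [uIcc_of_le (zero_le_one (α := ℝ))]
      have := intervalIntegral.continuousOn_primitive_interval' (hAsub 0 1 h0m h1m)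
        (by rw [uIcc_of_le (zero_le_one (α := ℝ))]; exact h0m)
      rwa [uIcc_of_le (zero_le_one (α := ℝ))] at this
    have e1 : ∫ t in (0:ℝ)..1, f t
        = ∫ t in (0:ℝ)..1, (f 0 + f' 0 * t + ∫ s in (0:ℝ)..t, A s) := by
      apply intervalIntegral.integral_congr
      intro t ht
      exact hrep t (by rwa [uIcc_of_le (zero_le_one (α := ℝ))] at ht)
    have e2 : ∫ t in (0:ℝ)..1, (f 0 + f' 0 * t + ∫ s in (0:ℝ)..t, A s)
        = (f 0 + f' 0/2) + ∫ t in (0:ℝ)..1, ∫ s in (0:ℝ)..t, A s := by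
      rw [intervalIntegral.integral_add (intervalIntegrable_const.add
          (show IntervalIntegrable (fun t : ℝ => f' 0 * t) volume 0 1 from
            (continuous_const.mul continuous_id').intervalIntegrable _ _)) hBint,
        intervalIntegral.integral_add intervalIntegrable_const
          (show IntervalIntegrable (fun t : ℝ => f' 0 * t) volume 0 1 from
            (continuous_const.mul continuous_id').intervalIntegrable _ _),
        intervalIntegral.integral_const, intervalIntegral.integral_const_mul,
        integral_id, smul_eq_mul]
      ring
    have e3 : ∫ t in (0:ℝ)..1, ∫ s in (0:ℝ)..t, A s = ∫ s in (0:ℝ)..1, (1 - s) * A s := by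
      have H := fubini_tri A (fun _ => 1) 1 zero_le_one (hAsub 0 1 h0m h1m) continuous_const
      have e31 : ∫ t in (0:ℝ)..1, ∫ s in (0:ℝ)..t, A s
          = ∫ t in (0:ℝ)..1, 1 * ∫ s in (0:ℝ)..t, A s := by
        apply intervalIntegral.integral_congr; intro t _; simp only [one_mul]
      rw [e31, H]
      apply intervalIntegral.integral_congr; intro s _
      simp only [integral_one]
    have e4 : ∫ s in (0:ℝ)..1, (1 - s) * A s = ∫ s in (0:ℝ)..1, ((1-s)^2/2) * f'' s := by
      have H := fubini_tri f'' (fun t => 1 - t) 1 zero_le_one hint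
        (continuous_const.sub continuous_id)
      have e41 : ∫ s in (0:ℝ)..1, (1 - s) * A s
          = ∫ t in (0:ℝ)..1, (1 - t) * ∫ s in (0:ℝ)..t, f'' s := by
        apply intervalIntegral.integral_congr; intro t _; simp [hA]
      rw [e41, H]
      apply intervalIntegral.integral_congr; intro s _
      have hin : ∫ t in s..1, (1 - t) = (1-s)^2/2 := by
        rw [show (fun t : ℝ => 1 - t) = (fun t : ℝ => (0:ℝ)*t^2 + (-1)*t + 1) from
          funext fun t => by ring, poly_int]
        ring
      simp only [hin]
    rw [e1, e2, e3, e4]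
  -- chunk 3: kernels
  set KL : ℝ → ℝ := fun s => s^2/2 - s2/8*s - (4-3*s2)/96 with hKL
  set KR : ℝ → ℝ := fun s => (1-s)^2/2 - s2/8*(1-s) - (4-3*s2)/96 with hKR
  have hKLc : Continuous KL := by rw [hKL]; fun_prop
  have hKRc : Continuous KR := by rw [hKR]; fun_prop
  have hKLint : ∀ a b : ℝ, (∫ s in a..b, KL s)
      = (1/2)*(b^3-a^3)/3 + (-(s2/8))*(b^2-a^2)/2 + (-((4-3*s2)/96))*(b-a) := by
    intro a b
    rw [show KL = (fun s : ℝ => (1/2)*s^2 + (-(s2/8))*s + (-((4-3*s2)/96))) from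
      funext fun s => by simp only [hKL]; ring, poly_int]
  have hKRint : ∀ a b : ℝ, (∫ s in a..b, KR s)
      = (1/2)*(b^3-a^3)/3 + (s2/8-1)*(b^2-a^2)/2 + (1/2 - s2/8 - (4-3*s2)/96)*(b-a) := by
    intro a b
    rw [show KR = (fun s : ℝ => (1/2)*s^2 + (s2/8-1)*s + (1/2 - s2/8 - (4-3*s2)/96)) from
      funext fun s => by simp only [hKR]; ring, poly_int]
  set m := (γ₂ + Γ₂)/2 with hm
  -- split lemmas for full-interval integrals
  have hs1 : (∫ s in (0:ℝ)..1, ((1-s)^2/2) * f'' s)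
      = (∫ s in (0:ℝ)..(1/2), ((1-s)^2/2) * f'' s)
        + ∫ s in (1/2:ℝ)..1, ((1-s)^2/2) * f'' s :=
    (intervalIntegral.integral_add_adjacent_intervals
      (hMI _ (by fun_prop) 0 (1/2) h0m hhm) (hMI _ (by fun_prop) (1/2) 1 hhm h1m)).symm
  have hs3 : (∫ s in (0:ℝ)..1, (1-s) * f'' s)
      = (∫ s in (0:ℝ)..(1/2), (1-s) * f'' s) + ∫ s in (1/2:ℝ)..1, (1-s) * f'' s :=
    (intervalIntegral.integral_add_adjacent_intervals
      (hMI _ (by fun_prop) 0 (1/2) h0m hhm) (hMI _ (by fun_prop) (1/2) 1 hhm h1m)).symm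
  have hone : (∫ s in (0:ℝ)..1, f'' s)
      = (∫ s in (0:ℝ)..(1/2), f'' s) + ∫ s in (1/2:ℝ)..1, f'' s :=
    (intervalIntegral.integral_add_adjacent_intervals
      (hf''sub 0 (1/2) h0m hhm) (hf''sub (1/2) 1 hhm h1m)).symm
  have hleft : ∫ s in (0:ℝ)..(1/2), KL s * f'' s
      = (∫ s in (0:ℝ)..(1/2), ((1-s)^2/2) * f'' s)
        - (1 - s2/4) * (∫ s in (0:ℝ)..(1/2), (1/2 - s) * f'' s)
        - s2/8 * (∫ s in (0:ℝ)..(1/2), (1-s) * f'' s)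
        - (4-3*s2)/96 * (∫ s in (0:ℝ)..(1/2), f'' s) := by
    have i1 := hMI (fun s => (1-s)^2/2) (by fun_prop) 0 (1/2) h0m hhm
    have i2 := (hMI (fun s => (1/2 - s)) (by fun_prop) 0 (1/2) h0m hhm).const_mul (1 - s2/4)
    have i3 := (hMI (fun s => (1 - s)) (by fun_prop) 0 (1/2) h0m hhm).const_mul (s2/8)
    have i4 := (hf''sub 0 (1/2) h0m hhm).const_mul ((4-3*s2)/96)
    have e : ∫ s in (0:ℝ)..(1/2), KL s * f'' s
        = ∫ s in (0:ℝ)..(1/2), (((1-s)^2/2) * f'' s - (1 - s2/4) * ((1/2 - s) * f'' s)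
            - s2/8 * ((1-s) * f'' s) - (4-3*s2)/96 * f'' s) := by
      apply intervalIntegral.integral_congr; intro s _; simp only [hKL]; ring
    rw [e, intervalIntegral.integral_sub ((i1.sub i2).sub i3) i4,
      intervalIntegral.integral_sub (i1.sub i2) i3,
      intervalIntegral.integral_sub i1 i2,
      intervalIntegral.integral_const_mul, intervalIntegral.integral_const_mul,
      intervalIntegral.integral_const_mul]
  have hright : ∫ s in (1/2:ℝ)..1, KR s * f'' s
      = (∫ s in (1/2:ℝ)..1, ((1-s)^2/2) * f'' s)
        - s2/8 * (∫ s in (1/2:ℝ)..1, (1-s) * f'' s)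
        - (4-3*s2)/96 * (∫ s in (1/2:ℝ)..1, f'' s) := by
    have i1 := hMI (fun s => (1-s)^2/2) (by fun_prop) (1/2) 1 hhm h1m
    have i3 := (hMI (fun s => (1 - s)) (by fun_prop) (1/2) 1 hhm h1m).const_mul (s2/8)
    have i4 := (hf''sub (1/2) 1 hhm h1m).const_mul ((4-3*s2)/96)
    have e : ∫ s in (1/2:ℝ)..1, KR s * f'' s
        = ∫ s in (1/2:ℝ)..1, (((1-s)^2/2) * f'' s - s2/8 * ((1-s) * f'' s)
            - (4-3*s2)/96 * f'' s) := by
      apply intervalIntegral.integral_congr; intro s _; simp only [hKR]; ring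
    rw [e, intervalIntegral.integral_sub (i1.sub i3) i4,
      intervalIntegral.integral_sub i1 i3,
      intervalIntegral.integral_const_mul, intervalIntegral.integral_const_mul]
  have hQP : ((∫ t in (0:ℝ)..1, f t) - s2 / 8 * f 0
        - (1 - s2 / 4) * f (1/2) - s2 / 8 * f 1)
      - (4 - 3 * s2) / 96 * (f' 1 - f' 0)
      = (∫ s in (0:ℝ)..(1/2), KL s * f'' s) + ∫ s in (1/2:ℝ)..1, KR s * f'' s := by
    rw [hIf, hBh, hB1, hA1, hs1, hs3, hone, hleft, hright]
    ring
  -- chunk 4: subtract mean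
  have hKL0 : (∫ s in (0:ℝ)..(1/2), KL s) = 0 := by rw [hKLint]; ring
  have hKR0 : (∫ s in (1/2:ℝ)..1, KR s) = 0 := by rw [hKRint]; ring
  have hILe : ∫ s in (0:ℝ)..(1/2), KL s * (f'' s - m) = ∫ s in (0:ℝ)..(1/2), KL s * f'' s := by
    have e : ∫ s in (0:ℝ)..(1/2), KL s * (f'' s - m)
        = ∫ s in (0:ℝ)..(1/2), (KL s * f'' s - m * KL s) :=
      intervalIntegral.integral_congr (fun s _ => by ring)
    rw [e, intervalIntegral.integral_sub (hMI KL hKLc 0 (1/2) h0m hhm)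
      ((hKLc.intervalIntegrable _ _).const_mul m),
      intervalIntegral.integral_const_mul, hKL0, mul_zero, sub_zero]
  have hIRe : ∫ s in (1/2:ℝ)..1, KR s * (f'' s - m) = ∫ s in (1/2:ℝ)..1, KR s * f'' s := by
    have e : ∫ s in (1/2:ℝ)..1, KR s * (f'' s - m)
        = ∫ s in (1/2:ℝ)..1, (KR s * f'' s - m * KR s) :=
      intervalIntegral.integral_congr (fun s _ => by ring)
    rw [e, intervalIntegral.integral_sub (hMI KR hKRc (1/2) 1 hhm h1m)
      ((hKRc.intervalIntegrable _ _).const_mul m),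
      intervalIntegral.integral_const_mul, hKR0, mul_zero, sub_zero]
-- chunk 5: piece bound machinery
  have hbd' : ∀ s, s ∈ Icc (0:ℝ) 1 → |f'' s - m| ≤ (Γ₂ - γ₂)/2 := by
    intro s hs
    have h := hbd s hs
    rw [abs_le, hm]
    exact ⟨by linarith only [h.1], by linarith only [h.2]⟩
  have piece : ∀ (K : ℝ → ℝ), Continuous K → ∀ a b σ : ℝ, 0 ≤ a → a ≤ b → b ≤ 1 →
      (∀ s, s ∈ Icc a b → σ * K s = |K s|) →
      |∫ s in a..b, K s * (f'' s - m)| ≤ (Γ₂ - γ₂)/2 * (σ * ∫ s in a..b, K s) := by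
    intro K hKc a b σ ha hab hb1 hsgn
    have haI : a ∈ Icc (0:ℝ) 1 := ⟨ha, hab.trans hb1⟩
    have hbI : b ∈ Icc (0:ℝ) 1 := ⟨ha.trans hab, hb1⟩
    have hKe : IntervalIntegrable (fun s => K s * (f'' s - m)) volume a b :=
      ((hf''sub a b haI hbI).sub intervalIntegrable_const).continuousOn_mul hKc.continuousOn
    have h1 : |∫ s in a..b, K s * (f'' s - m)| ≤ ∫ s in a..b, |K s * (f'' s - m)| :=
      intervalIntegral.abs_integral_le_integral_abs hab
    have h2 : (∫ s in a..b, |K s * (f'' s - m)|) ≤ ∫ s in a..b, |K s| * ((Γ₂ - γ₂)/2) := by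
      apply intervalIntegral.integral_mono_on hab hKe.abs
        ((hKc.abs.mul continuous_const).intervalIntegrable _ _)
      intro s hs
      rw [abs_mul]
      exact mul_le_mul_of_nonneg_left (hbd' s ⟨ha.trans hs.1, hs.2.trans hb1⟩) (abs_nonneg _)
    have h3 : (∫ s in a..b, |K s| * ((Γ₂ - γ₂)/2)) = (Γ₂ - γ₂)/2 * (σ * ∫ s in a..b, K s) := by
      rw [intervalIntegral.integral_mul_const]
      have e : (∫ s in a..b, |K s|) = ∫ s in a..b, σ * K s := by
        apply intervalIntegral.integral_congr
        intro s hs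
        exact (hsgn s (by rwa [uIcc_of_le hab] at hs)).symm
      rw [e, intervalIntegral.integral_const_mul]
      ring
    linarith only [h1, h2, h3]
-- chunk 6: sign facts
  have hKLfact : ∀ s : ℝ, KL s = (s - r₁) * (s - r₂)/2 := by
    intro s; simp only [hKL]; linear_combination (s/2) * hp - (1/2) * hq
  have hKRfact : ∀ s : ℝ, KR s = (1 - s - r₁) * (1 - s - r₂)/2 := by
    intro s; simp only [hKR]; linear_combination ((1-s)/2) * hp - (1/2) * hq
  have sgn1 : ∀ s, s ∈ Icc (0:ℝ) r₁ → (1:ℝ) * KL s = |KL s| := by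
    intro s hs
    have hx := mul_nonneg (show (0:ℝ) ≤ r₁ - s by linarith only [hs.2])
      (show (0:ℝ) ≤ r₂ - s by linarith only [hs.2, hr12])
    have hnn : 0 ≤ KL s := by rw [hKLfact]; nlinarith only [hx]
    rw [one_mul, abs_of_nonneg hnn]
  have sgn2 : ∀ s, s ∈ Icc r₁ r₂ → (-1:ℝ) * KL s = |KL s| := by
    intro s hs
    have hx := mul_nonneg (show (0:ℝ) ≤ s - r₁ by linarith only [hs.1])
      (show (0:ℝ) ≤ r₂ - s by linarith only [hs.2])
    have hnp : KL s ≤ 0 := by rw [hKLfact]; nlinarith only [hx]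
    rw [abs_of_nonpos hnp]; ring
  have sgn3 : ∀ s, s ∈ Icc r₂ (1/2:ℝ) → (1:ℝ) * KL s = |KL s| := by
    intro s hs
    have hx := mul_nonneg (show (0:ℝ) ≤ s - r₁ by linarith only [hs.1, hr12])
      (show (0:ℝ) ≤ s - r₂ by linarith only [hs.1])
    have hnn : 0 ≤ KL s := by rw [hKLfact]; nlinarith only [hx]
    rw [one_mul, abs_of_nonneg hnn]
  have sgn4 : ∀ s, s ∈ Icc (1/2:ℝ) (1-r₂) → (1:ℝ) * KR s = |KR s| := by
    intro s hs
    have hx := mul_nonneg (show (0:ℝ) ≤ 1 - s - r₁ by linarith only [hs.2, hr12])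
      (show (0:ℝ) ≤ 1 - s - r₂ by linarith only [hs.2])
    have hnn : 0 ≤ KR s := by rw [hKRfact]; nlinarith only [hx]
    rw [one_mul, abs_of_nonneg hnn]
  have sgn5 : ∀ s, s ∈ Icc (1-r₂) (1-r₁) → (-1:ℝ) * KR s = |KR s| := by
    intro s hs
    have hx := mul_nonneg (show (0:ℝ) ≤ 1 - s - r₁ by linarith only [hs.2])
      (show (0:ℝ) ≤ s - (1 - r₂) by linarith only [hs.1])
    have hnp : KR s ≤ 0 := by rw [hKRfact]; nlinarith only [hx]
    rw [abs_of_nonpos hnp]; ring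
  have sgn6 : ∀ s, s ∈ Icc (1-r₁) (1:ℝ) → (1:ℝ) * KR s = |KR s| := by
    intro s hs
    have hx := mul_nonneg (show (0:ℝ) ≤ r₁ - (1 - s) by linarith only [hs.1])
      (show (0:ℝ) ≤ r₂ - (1 - s) by linarith only [hs.1, hr12])
    have hnn : 0 ≤ KR s := by rw [hKRfact]; nlinarith only [hx]
    rw [one_mul, abs_of_nonneg hnn]
-- chunk 7: splits into pieces and final assembly
  have hr1m : r₁ ∈ Icc (0:ℝ) 1 := ⟨hr10, by linarith only [hr12, hr2h]⟩
  have hr2m : r₂ ∈ Icc (0:ℝ) 1 := ⟨by linarith only [hr10, hr12], by linarith only [hr2h]⟩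
  have h1r1m : (1-r₁) ∈ Icc (0:ℝ) 1 := ⟨by linarith only [hr12, hr2h], by linarith only [hr10]⟩
  have h1r2m : (1-r₂) ∈ Icc (0:ℝ) 1 := ⟨by linarith only [hr2h], by linarith only [hr10, hr12]⟩
  have hKEiL : ∀ a b : ℝ, a ∈ Icc (0:ℝ) 1 → b ∈ Icc (0:ℝ) 1 →
      IntervalIntegrable (fun s => KL s * (f'' s - m)) volume a b := fun a b ha hb =>
    ((hf''sub a b ha hb).sub intervalIntegrable_const).continuousOn_mul hKLc.continuousOn
  have hKEiR : ∀ a b : ℝ, a ∈ Icc (0:ℝ) 1 → b ∈ Icc (0:ℝ) 1 →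
      IntervalIntegrable (fun s => KR s * (f'' s - m)) volume a b := fun a b ha hb =>
    ((hf''sub a b ha hb).sub intervalIntegrable_const).continuousOn_mul hKRc.continuousOn
  have hsplitIL : ∫ s in (0:ℝ)..(1/2), KL s * (f'' s - m)
      = (∫ s in (0:ℝ)..r₁, KL s * (f'' s - m)) + (∫ s in r₁..r₂, KL s * (f'' s - m))
        + ∫ s in r₂..(1/2:ℝ), KL s * (f'' s - m) := by
    have a1 := intervalIntegral.integral_add_adjacent_intervals
      (hKEiL 0 r₁ h0m hr1m) (hKEiL r₁ r₂ hr1m hr2m)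
    have a2 := intervalIntegral.integral_add_adjacent_intervals
      (hKEiL 0 r₂ h0m hr2m) (hKEiL r₂ (1/2) hr2m hhm)
    linarith only [a1, a2]
  have hsplitIR : ∫ s in (1/2:ℝ)..1, KR s * (f'' s - m)
      = (∫ s in (1/2:ℝ)..(1-r₂), KR s * (f'' s - m))
        + (∫ s in (1-r₂)..(1-r₁), KR s * (f'' s - m))
        + ∫ s in (1-r₁)..(1:ℝ), KR s * (f'' s - m) := by
    have a1 := intervalIntegral.integral_add_adjacent_intervals
      (hKEiR (1/2) (1-r₂) hhm h1r2m) (hKEiR (1-r₂) (1-r₁) h1r2m h1r1m)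
    have a2 := intervalIntegral.integral_add_adjacent_intervals
      (hKEiR (1/2) (1-r₁) hhm h1r1m) (hKEiR (1-r₁) 1 h1r1m h1m)
    linarith only [a1, a2]
  have p1 := piece KL hKLc 0 r₁ 1 le_rfl hr10 (by linarith only [hr12, hr2h]) sgn1
  have p2 := piece KL hKLc r₁ r₂ (-1) hr10 hr12 (by linarith only [hr2h]) sgn2
  have p3 := piece KL hKLc r₂ (1/2) 1 (by linarith only [hr10, hr12]) hr2h (by norm_num) sgn3
  have p4 := piece KR hKRc (1/2) (1-r₂) 1 (by norm_num) (by linarith only [hr2h]) (by linarith only [hr10, hr12]) sgn4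
  have p5 := piece KR hKRc (1-r₂) (1-r₁) (-1) (by linarith only [hr2h]) (by linarith only [hr12]) (by linarith only [hr10]) sgn5
  have p6 := piece KR hKRc (1-r₁) 1 1 (by linarith only [hr12, hr2h]) (by linarith only [hr10]) le_rfl sgn6
  have hGd : (1/2)*(r₂^3-r₁^3)/3 + (-(s2/8))*(r₂^2-r₁^2)/2 + (-((4-3*s2)/96))*(r₂-r₁)
      = -((r₂ - r₁)*(11-6*s2)/288) := by
    linear_combination (-1/288 + s2/96 - s2^2/192 - r₂*s2/48 + r₂^2/6 + r₁*s2/48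
      - r₁*r₂/6 - r₁^2/6) * hp + (-(s2/24) + r₁/3) * hq + (-(s2/768) + r₁/96) * h2
  have hstep : (r₂ - r₁)*(11-6*s2)/72 = 5/96*s6 - 29/432*s3 := by
    linear_combination ((11-6*s2)/72) * hd - (18/864) * hmix2 - (12/864) * h6
  have hT : 1 * (∫ s in (0:ℝ)..r₁, KL s) + (-1) * (∫ s in r₁..r₂, KL s)
      + 1 * (∫ s in r₂..(1/2:ℝ), KL s)
      + (1 * (∫ s in (1/2:ℝ)..(1-r₂), KR s) + (-1) * (∫ s in (1-r₂)..(1-r₁), KR s)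
        + 1 * (∫ s in (1-r₁)..(1:ℝ), KR s))
      = 5/96*s6 - 29/432*s3 := by
    rw [hKLint, hKLint, hKLint, hKRint, hKRint, hKRint]
    linear_combination (-4 : ℝ) * hGd + hstep
  have hsum : (Γ₂-γ₂)/2 * (1 * (∫ s in (0:ℝ)..r₁, KL s))
      + (Γ₂-γ₂)/2 * ((-1) * (∫ s in r₁..r₂, KL s))
      + (Γ₂-γ₂)/2 * (1 * (∫ s in r₂..(1/2:ℝ), KL s))
      + (Γ₂-γ₂)/2 * (1 * (∫ s in (1/2:ℝ)..(1-r₂), KR s))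
      + (Γ₂-γ₂)/2 * ((-1) * (∫ s in (1-r₂)..(1-r₁), KR s))
      + (Γ₂-γ₂)/2 * (1 * (∫ s in (1-r₁)..(1:ℝ), KR s))
      = (Γ₂-γ₂)/2 * (5/96*s6 - 29/432*s3) := by
    linear_combination ((Γ₂-γ₂)/2) * hT
  rw [hQP, ← hILe, ← hIRe, hsplitIL, hsplitIR]
  have habs : ∀ x1 x2 x3 y1 y2 y3 : ℝ,
      |x1 + x2 + x3 + (y1 + y2 + y3)| ≤ |x1| + |x2| + |x3| + |y1| + |y2| + |y3| := by
    intro x1 x2 x3 y1 y2 y3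
    have a1 := abs_add_le (x1 + x2 + x3) (y1 + y2 + y3)
    have a2 := abs_add_le (x1 + x2) x3
    have a3 := abs_add_le x1 x2
    have a4 := abs_add_le (y1 + y2) y3
    have a5 := abs_add_le y1 y2
    linarith only [a1, a2, a3, a4, a5]
  refine le_trans (habs _ _ _ _ _ _) ?_
  refine le_of_le_of_eq
    (add_le_add (add_le_add (add_le_add (add_le_add (add_le_add p1 p2) p3) p4) p5) p6) ?_
  linear_combination hsum
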